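/- Let f: ℝⁿ → ℝ be separable convex, i.e., f(x) = Σⱼ fⱼ(xⱼ) with each fⱼ : ℝ → ℝ convex. Let x ∈ ℝⁿ and let g_1,...,g_m ∈ ℝⁿ be vectors that all lie in a common orthant (i.e., for each coordinate j, the signs of g_{i,j} agree across i). Then f(x + Σᵢ gᵢ) − f(x) ≥ Σᵢ (f(x + gᵢ) − f(x)). -/

import Mathlib

/-- Key 1D lemma: convexity gives superadditivity of increments of the same sign. -/
lemma convex_superadd (φ : ℝ → ℝ) (hφ : ConvexOn ℝ Set.univ φ) (a s t : ℝ)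
    (h : s * t ≥ 0) : φ (a + s) + φ (a + t) ≤ φ a + φ (a + s + t) := by
  rcases eq_or_ne (s + t) 0 with h0 | h0
  · have hs : s = 0 := by nlinarith [sq_nonneg s, sq_nonneg t]
    have ht : t = 0 := by nlinarith [sq_nonneg s, sq_nonneg t]
    simp [hs, ht]
  · set c := s / (s + t) with hc
    have hc0 : 0 ≤ c := by
      have : c = (s * (s + t)) / ((s + t) ^ 2) := by rw [hc]; field_simp
      rw [this]
      exact div_nonneg (by nlinarith) (by positivity)
    have hc1 : c ≤ 1 := by
      have h1c : 1 - c = t / (s + t) := by rw [hc]; field_simp; ring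
      have : 0 ≤ 1 - c := by
        rw [h1c]
        have : t / (s + t) = (t * (s + t)) / ((s + t) ^ 2) := by field_simp
        rw [this]
        exact div_nonneg (by nlinarith) (by positivity)
      linarith
    have h1 := hφ.2 (Set.mem_univ a) (Set.mem_univ (a + s + t))
      (by linarith : (0:ℝ) ≤ 1 - c) hc0 (by ring)
    have h2 := hφ.2 (Set.mem_univ a) (Set.mem_univ (a + s + t))
      (by linarith : (0:ℝ) ≤ c) (by linarith : (0:ℝ) ≤ 1 - c) (by ring)
    have e1 : (1 - c) • a + c • (a + s + t) = a + s := by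
      simp only [smul_eq_mul]
      have : c * (s + t) = s := by rw [hc]; field_simp
      nlinarith [this]
    have e2 : c • a + (1 - c) • (a + s + t) = a + t := by
      simp only [smul_eq_mul]
      have : c * (s + t) = s := by rw [hc]; field_simp
      nlinarith [this]
    rw [e1] at h1
    rw [e2] at h2
    simp only [smul_eq_mul] at h1 h2
    linarith

lemma convex_superadd_sum {ι : Type*} (φ : ℝ → ℝ) (hφ : ConvexOn ℝ Set.univ φ) (a : ℝ)
    (t : ι → ℝ) (S : Finset ι) (h : ∀ i ∈ S, ∀ k ∈ S, t i * t k ≥ 0) :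
    ∑ i ∈ S, (φ (a + t i) - φ a) ≤ φ (a + ∑ i ∈ S, t i) - φ a := by
  classical
  induction S using Finset.induction_on with
  | empty => simp
  | @insert i S hi ih =>
    rw [Finset.sum_insert hi, Finset.sum_insert hi]
    have hsum : (∑ k ∈ S, t k) * t i ≥ 0 := by
      rw [Finset.sum_mul]
      apply Finset.sum_nonneg
      intro k hk
      exact h k (Finset.mem_insert_of_mem hk) i (Finset.mem_insert_self i S)
    have key := convex_superadd φ hφ a (∑ k ∈ S, t k) (t i) hsum
    have ih' := ih (fun p hp q hq => h p (Finset.mem_insert_of_mem hp) q (Finset.mem_insert_of_mem hq))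
    have e : a + (t i + ∑ k ∈ S, t k) = a + (∑ k ∈ S, t k) + t i := by ring
    rw [e]
    linarith

/-- Supermodularity of separable convex functions with respect to conformal sums. -/
theorem separable_convex_conformal (n m : ℕ) (f : (Fin n → ℝ) → ℝ)
    (fj : Fin n → ℝ → ℝ)
    (hconv : ∀ j, ConvexOn ℝ Set.univ (fj j))
    (hsep : ∀ x : Fin n → ℝ, f x = ∑ j, fj j (x j))
    (x : Fin n → ℝ) (g : Fin m → Fin n → ℝ)
    (hconf : ∀ i k j, g i j * g k j ≥ 0) :
    f (x + ∑ i, g i) - f x ≥ ∑ i, (f (x + g i) - f x) := by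
  simp only [hsep]
  have lhs : ∀ i : Fin m, ∑ j, fj j ((x + g i) j) - ∑ j, fj j (x j)
      = ∑ j, (fj j (x j + g i j) - fj j (x j)) := by
    intro i
    rw [Finset.sum_sub_distrib]
    simp [Pi.add_apply]
  simp only [lhs]
  rw [Finset.sum_comm]
  have : ∑ j, fj j ((x + ∑ i, g i) j) - ∑ j, fj j (x j)
      = ∑ j, (fj j (x j + ∑ i, g i j) - fj j (x j)) := by
    rw [Finset.sum_sub_distrib]
    simp [Finset.sum_apply]
  rw [this]
  apply Finset.sum_le_sum
  intro j _
  exact convex_superadd_sum (fj j) (hconv j) (x j) (fun i => g i j) Finset.univ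
    (fun i _ k _ => hconf i k j)
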